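/- Let Λ ≥ 1, C₁ > 2, C > 0 and l ∈ (0,1) be real constants. For t ∈ (0, e^{−e}) set g(t) = (C₁Λ + C₁)^{1/2} · (log(log(1/t)))^{−1/2} and κ(t) = log((3/2) · g(t)^{−1}). Then there exists t₀ ∈ (0, e^{−e}) such that for all t ∈ (0, t₀): (C e^{κ(t)})^{C e^{4Λ κ(t) e^{κ(t)}}} ≤ t^{−l}. -/
import Mathlib


open Set

set_option maxHeartbeats 800000

noncomputable section

/-- `g(t) = (C₁Λ + C₁)^{1/2} (log(log(1/t)))^{-1/2}`. -/
def gFun (C₁ Λ t : ℝ) : ℝ :=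
  (C₁ * Λ + C₁) ^ ((1 : ℝ) / 2) * Real.log (Real.log (1 / t)) ^ (-(1 / 2 : ℝ))

/-- `κ(t) = log((3/2) g(t)⁻¹)`. -/
def κFun (C₁ Λ t : ℝ) : ℝ := Real.log ((3 / 2) * (gFun C₁ Λ t)⁻¹)

lemma keyX (Λ C l β κ x : ℝ) (hΛ : 1 ≤ Λ) (hβ : 0 < β) (hC : 0 < C)
    (hl0 : 0 < l) (hl1 : l < 1)
    (hx : (max 1 (4*Λ*β*(|Real.log β|+2) + (|Real.log C| + |Real.log β| + 2)
        + |Real.log C| + 1 - Real.log l)) ^ (4:ℝ) ≤ x)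
    (hκ : κ = Real.log β + 1/2 * Real.log x) :
    C * Real.exp (4 * Λ * κ * Real.exp κ) * (Real.log C + κ) ≤ l * Real.exp x := by
  set E₁ : ℝ := 4*Λ*β*(|Real.log β|+2) with hE₁
  set E₂ : ℝ := |Real.log C| + |Real.log β| + 2 with hE₂
  set N : ℝ := max 1 (E₁ + E₂ + |Real.log C| + 1 - Real.log l) with hN
  have hN1 : (1:ℝ) ≤ N := le_max_left _ _
  have hN0 : (0:ℝ) ≤ N := by linarith
  have hx1 : (1:ℝ) ≤ x := by
    calc (1:ℝ) = 1 ^ (4:ℝ) := (Real.one_rpow _).symm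
    _ ≤ N ^ (4:ℝ) := Real.rpow_le_rpow zero_le_one hN1 (by norm_num)
    _ ≤ x := hx
  have hx0 : (0:ℝ) < x := by linarith
  set y : ℝ := x ^ ((1:ℝ)/4) with hy
  have hy1 : (1:ℝ) ≤ y := by
    calc (1:ℝ) = 1 ^ ((1:ℝ)/4) := (Real.one_rpow _).symm
    _ ≤ y := Real.rpow_le_rpow zero_le_one hx1 (by norm_num)
  have hy0 : (0:ℝ) < y := by linarith
  have hyN : N ≤ y := by
    calc N = (N ^ (4:ℝ)) ^ ((1:ℝ)/4) := by
          rw [← Real.rpow_mul hN0]; norm_num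
    _ ≤ y := Real.rpow_le_rpow (Real.rpow_nonneg hN0 _) hx (by norm_num)
  have hsq : y * y = x ^ ((1:ℝ)/2) := by
    rw [hy, ← Real.rpow_add hx0]; norm_num
  have hx4 : (y * y) * (y * y) = x := by
    rw [hsq, ← Real.rpow_add hx0]; norm_num
  have hlogy : Real.log y = 1/4 * Real.log x := by
    rw [hy, Real.log_rpow hx0]
  have hlogx : Real.log x ≤ 4 * y := by
    have h := Real.log_le_sub_one_of_pos hy0
    rw [hlogy] at h; linarith
  have hlogx0 : (0:ℝ) ≤ Real.log x := Real.log_nonneg hx1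
  have hexpκ : Real.exp κ = β * (y * y) := by
    rw [hκ, Real.exp_add, Real.exp_log hβ, hsq, Real.rpow_def_of_pos hx0]
    ring_nf
  have habsβ : (0:ℝ) ≤ |Real.log β| := abs_nonneg _
  have habsC : (0:ℝ) ≤ |Real.log C| := abs_nonneg _
  have hκub : κ ≤ (|Real.log β| + 2) * y := by
    rw [hκ]
    have h1 : Real.log β ≤ |Real.log β| := le_abs_self _
    nlinarith
  have hE1nn : (0:ℝ) ≤ 4*Λ*β*(y*y) :=
    mul_nonneg (mul_nonneg (by linarith) hβ.le) (mul_self_nonneg y)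
  have hE : 4 * Λ * κ * Real.exp κ ≤ E₁ * (y*y*y) := by
    have h1 : 4 * Λ * κ * Real.exp κ = (4*Λ*β*(y*y)) * κ := by rw [hexpκ]; ring
    have h2 : (4*Λ*β*(y*y)) * κ ≤ (4*Λ*β*(y*y)) * ((|Real.log β| + 2) * y) :=
      mul_le_mul_of_nonneg_left hκub hE1nn
    rw [h1]
    calc (4*Λ*β*(y*y)) * κ ≤ (4*Λ*β*(y*y)) * ((|Real.log β| + 2) * y) := h2
    _ = E₁ * (y*y*y) := by rw [hE₁]; ring
  have hlogCκ : Real.log C + κ ≤ E₂ * y := by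
    rw [hκ, hE₂]
    have h1 : Real.log C ≤ |Real.log C| := le_abs_self _
    have h2 : Real.log β ≤ |Real.log β| := le_abs_self _
    nlinarith
  have hE₂0 : (0:ℝ) ≤ E₂ := by rw [hE₂]; linarith
  have hE₁0 : (0:ℝ) ≤ E₁ := by
    rw [hE₁]
    exact mul_nonneg (mul_nonneg (by linarith) hβ.le) (by positivity)
  have hy3 : (1:ℝ) ≤ y*y*y := by nlinarith
  -- Step A : bound product
  have hCE : (0:ℝ) ≤ C * Real.exp (4 * Λ * κ * Real.exp κ) :=
    mul_nonneg hC.le (Real.exp_nonneg _)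
  have stepA : C * Real.exp (4 * Λ * κ * Real.exp κ) * (Real.log C + κ)
      ≤ C * Real.exp (E₁ * (y*y*y)) * (E₂ * y) := by
    calc C * Real.exp (4 * Λ * κ * Real.exp κ) * (Real.log C + κ)
        ≤ C * Real.exp (4 * Λ * κ * Real.exp κ) * (E₂ * y) :=
          mul_le_mul_of_nonneg_left hlogCκ hCE
    _ ≤ C * Real.exp (E₁ * (y*y*y)) * (E₂ * y) := by
          apply mul_le_mul_of_nonneg_right _ (mul_nonneg hE₂0 hy0.le)
          exact mul_le_mul_of_nonneg_left (Real.exp_le_exp.mpr hE) hC.le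
  -- Step B : everything under one exponential
  have hCle : C ≤ Real.exp (|Real.log C|) := by
    calc C = Real.exp (Real.log C) := (Real.exp_log hC).symm
    _ ≤ Real.exp (|Real.log C|) := Real.exp_le_exp.mpr (le_abs_self _)
  have hyy3 : y ≤ y*y*y := by nlinarith
  have hE2y : E₂ * y ≤ Real.exp (E₂ * (y*y*y)) := by
    have h1 : E₂ * y ≤ E₂ * (y*y*y) := mul_le_mul_of_nonneg_left hyy3 hE₂0
    exact le_trans h1 (by linarith [Real.add_one_le_exp (E₂ * (y*y*y))])
  have stepB : C * Real.exp (E₁ * (y*y*y)) * (E₂ * y)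
      ≤ Real.exp (|Real.log C| + E₁ * (y*y*y) + E₂ * (y*y*y)) := by
    rw [Real.exp_add, Real.exp_add]
    calc C * Real.exp (E₁ * (y*y*y)) * (E₂ * y)
        ≤ Real.exp (|Real.log C|) * Real.exp (E₁ * (y*y*y)) * (E₂ * y) := by
          apply mul_le_mul_of_nonneg_right _ (mul_nonneg hE₂0 hy0.le)
          exact mul_le_mul_of_nonneg_right hCle (Real.exp_nonneg _)
    _ ≤ Real.exp (|Real.log C|) * Real.exp (E₁ * (y*y*y)) * Real.exp (E₂ * (y*y*y)) := by
          apply mul_le_mul_of_nonneg_left hE2y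
          exact mul_nonneg (Real.exp_nonneg _) (Real.exp_nonneg _)
  have hlogl : Real.log l < 0 := Real.log_neg hl0 hl1
  have hyE : E₁ + E₂ + |Real.log C| + 1 - Real.log l ≤ y :=
    le_trans (le_max_right _ _) hyN
  have stepC : |Real.log C| + E₁ * (y*y*y) + E₂ * (y*y*y) ≤ Real.log l + x := by
    rw [← hx4]
    have h3nn : (0:ℝ) ≤ y*y*y := le_trans zero_le_one hy3
    have hm1 : (E₁ + E₂ + |Real.log C| + 1 - Real.log l) * (y*y*y) ≤ y * (y*y*y) :=
      mul_le_mul_of_nonneg_right hyE h3nn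
    have hm2 : (|Real.log C| + 1 - Real.log l) * 1 ≤ (|Real.log C| + 1 - Real.log l) * (y*y*y) :=
      mul_le_mul_of_nonneg_left hy3 (by linarith)
    nlinarith
  calc C * Real.exp (4 * Λ * κ * Real.exp κ) * (Real.log C + κ)
      ≤ Real.exp (|Real.log C| + E₁ * (y*y*y) + E₂ * (y*y*y)) :=
        le_trans stepA stepB
  _ ≤ Real.exp (Real.log l + x) := Real.exp_le_exp.mpr stepC
  _ = l * Real.exp x := by rw [Real.exp_add, Real.exp_log hl0]

/-- Let `Λ ≥ 1`, `C₁ > 2`, `C > 0`, `l ∈ (0,1)`.  With `g` and `κ` as above, there is a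
`t₀ ∈ (0, e^{-e})` such that for all `t ∈ (0, t₀)`,
`(C e^{κ(t)})^{C e^{4Λ κ(t) e^{κ(t)}}} ≤ t^{-l}`. -/
theorem stmt7 (Λ C₁ C l : ℝ) (hΛ : 1 ≤ Λ) (hC₁ : 2 < C₁) (hC : 0 < C)
    (hl0 : 0 < l) (hl1 : l < 1) :
    ∃ t₀ ∈ Ioo (0 : ℝ) (Real.exp (-Real.exp 1)),
      ∀ t ∈ Ioo (0 : ℝ) t₀,
        (C * Real.exp (κFun C₁ Λ t)) ^
            (C * Real.exp (4 * Λ * κFun C₁ Λ t * Real.exp (κFun C₁ Λ t)))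
          ≤ t ^ (-l) := by
  set A : ℝ := C₁ * Λ + C₁ with hA
  have hA0 : 0 < A := by rw [hA]; nlinarith
  set β : ℝ := (3/2) * (A ^ ((1:ℝ)/2))⁻¹ with hβdef
  have hApow : 0 < A ^ ((1:ℝ)/2) := Real.rpow_pos_of_pos hA0 _
  have hβ : 0 < β := by rw [hβdef]; positivity
  set N : ℝ := max 1 (4*Λ*β*(|Real.log β|+2) + (|Real.log C| + |Real.log β| + 2)
        + |Real.log C| + 1 - Real.log l) with hNdef
  set M : ℝ := max (N ^ (4:ℝ)) 2 with hM
  have hM2 : (2:ℝ) ≤ M := le_max_right _ _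
  refine ⟨Real.exp (-(Real.exp (Real.exp M))), ⟨Real.exp_pos _, ?_⟩, ?_⟩
  · apply Real.exp_lt_exp.mpr
    have h1 : (1:ℝ) < Real.exp M := by
      calc (1:ℝ) = Real.exp 0 := Real.exp_zero.symm
      _ < Real.exp M := Real.exp_lt_exp.mpr (by linarith)
    have h2 : Real.exp 1 < Real.exp (Real.exp M) := Real.exp_lt_exp.mpr h1
    linarith
  · intro t ht
    obtain ⟨ht0, htlt⟩ := ht
    rw [Real.exp_neg] at htlt
    have ht0' : (0:ℝ) < 1/t := by positivity
    have h1t : Real.exp (Real.exp (Real.exp M)) < 1/t := by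
      have h2 : t * Real.exp (Real.exp (Real.exp M)) < 1 := by
        calc t * Real.exp (Real.exp (Real.exp M))
            < (Real.exp (Real.exp (Real.exp M)))⁻¹ * Real.exp (Real.exp (Real.exp M)) :=
              mul_lt_mul_of_pos_right htlt (Real.exp_pos _)
        _ = 1 := inv_mul_cancel₀ (Real.exp_ne_zero _)
      rw [lt_div_iff₀ ht0]
      linarith
    have hlog1 : Real.exp (Real.exp M) < Real.log (1/t) :=
      (Real.lt_log_iff_exp_lt ht0').mpr h1t
    have hL : 0 < Real.log (1/t) := lt_trans (Real.exp_pos _) hlog1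
    set x : ℝ := Real.log (Real.log (1/t)) with hxdef
    have hxM : Real.exp M < x := (Real.lt_log_iff_exp_lt hL).mpr hlog1
    have hMx : M ≤ Real.exp M := by linarith [Real.add_one_le_exp M]
    have hxx : N ^ (4:ℝ) ≤ x := le_trans (le_max_left _ _) (by linarith)
    have hN1 : (1:ℝ) ≤ N := le_max_left _ _
    have hx1 : (1:ℝ) ≤ x := by
      calc (1:ℝ) = 1 ^ (4:ℝ) := (Real.one_rpow _).symm
      _ ≤ N ^ (4:ℝ) := Real.rpow_le_rpow zero_le_one hN1 (by norm_num)
      _ ≤ x := hxx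
    have hx0 : (0:ℝ) < x := by linarith
    have hxpow : (0:ℝ) < x ^ ((1:ℝ)/2) := Real.rpow_pos_of_pos hx0 _
    have hκeq : κFun C₁ Λ t = Real.log β + 1/2 * Real.log x := by
      rw [κFun, gFun, ← hA, ← hxdef]
      have h1 : (A ^ ((1:ℝ)/2) * x ^ (-(1/2:ℝ)))⁻¹
          = (A ^ ((1:ℝ)/2))⁻¹ * x ^ ((1/2:ℝ)) := by
        rw [mul_inv, Real.rpow_neg hx0.le, inv_inv]
      rw [h1, show (3/2 : ℝ) * ((A ^ ((1:ℝ)/2))⁻¹ * x ^ ((1/2:ℝ)))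
          = β * x ^ ((1/2:ℝ)) by rw [hβdef]; ring,
        Real.log_mul hβ.ne' hxpow.ne', Real.log_rpow hx0]
    have key := keyX Λ C l β (κFun C₁ Λ t) x hΛ hβ hC hl0 hl1 hxx hκeq
    have hbase : 0 < C * Real.exp (κFun C₁ Λ t) := by positivity
    rw [Real.rpow_def_of_pos hbase]
    have hrhs : t ^ (-l) = Real.exp (l * Real.exp x) := by
      have hlt : Real.log (1/t) = -Real.log t := by rw [one_div, Real.log_inv]
      rw [Real.rpow_def_of_pos ht0]
      congr 1
      rw [hxdef, Real.exp_log hL, hlt]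
      ring
    rw [hrhs]
    apply Real.exp_le_exp.mpr
    rw [Real.log_mul hC.ne' (Real.exp_ne_zero _), Real.log_exp]
    calc (Real.log C + κFun C₁ Λ t)
          * (C * Real.exp (4 * Λ * κFun C₁ Λ t * Real.exp (κFun C₁ Λ t)))
        = C * Real.exp (4 * Λ * κFun C₁ Λ t * Real.exp (κFun C₁ Λ t))
          * (Real.log C + κFun C₁ Λ t) := by ring
    _ ≤ l * Real.exp x := key
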